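/- Assume the rate coefficients satisfy the growth condition (GB) with constants C, Q and weights q_{i,k}, and let σ belong to class 𝓔 with associated constant m_σ. Then there exist an integer M₀ ≥ 2 and, for each T > 0 and each choice of nonnegative initial data (c_{0i}), a constant γ_T > 0 depending only on σ, C, m_σ, Q, T and ∑_i i c_{0i}, such that for every integer N ≥ M₀ the nonnegative solution c^N of the N-truncated isolated DGED system with initial data c_i^N(0) = c_{0i} (0 ≤ i ≤ N) satisfies 0 ≤ ∫_0^T ∑_{p=M₀}^{N} ∑_{k=1}^{p−1} (σ(p−1)/(p−1)) a(p,0;k) c_0^N(t) c_p^N(t) dt ≤ γ_T ∑_{i=0}^N σ(i) c_{0i}. -/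

import Mathlib

open Finset

/-- Truncated operator `Q^N_{1,i}`. -/
noncomputable def QN1 (a : ℕ → ℕ → ℕ → ℝ) (N : ℕ) (c : ℕ → ℝ) (i : ℕ) : ℝ :=
  ∑ k ∈ Finset.Icc 1 (N - i), ∑ j ∈ Finset.Icc 0 (N - k), a (i + k) j k * c (i + k) * c j

/-- Truncated operator `Q^N_{2,i}`. -/
noncomputable def QN2 (a : ℕ → ℕ → ℕ → ℝ) (N : ℕ) (c : ℕ → ℝ) (i : ℕ) : ℝ :=
  -∑ k ∈ Finset.Icc 1 (N - i), ∑ j ∈ Finset.Icc k N, a j i k * c j * c i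

/-- Truncated operator `Q^N_{3,i}`. -/
noncomputable def QN3 (a : ℕ → ℕ → ℕ → ℝ) (N : ℕ) (c : ℕ → ℝ) (i : ℕ) : ℝ :=
  ∑ k ∈ Finset.Icc 1 i, ∑ j ∈ Finset.Icc k N, a j (i - k) k * c j * c (i - k)

/-- Truncated operator `Q^N_{4,i}`. -/
noncomputable def QN4 (a : ℕ → ℕ → ℕ → ℝ) (N : ℕ) (c : ℕ → ℝ) (i : ℕ) : ℝ :=
  -∑ k ∈ Finset.Icc 1 i, ∑ j ∈ Finset.Icc 0 (N - k), a i j k * c j * c i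

/-- `c` is a solution of the `N`-truncated isolated DGED system on the set `I`. -/
def IsTruncSolIso (a : ℕ → ℕ → ℕ → ℝ) (N : ℕ) (I : Set ℝ) (c : ℕ → ℝ → ℝ) : Prop :=
  ∀ t ∈ I,
    HasDerivAt (c 0) (QN1 a N (fun n => c n t) 0 + QN2 a N (fun n => c n t) 0) t ∧
    (∀ i, 1 ≤ i → i ≤ N - 1 →
      HasDerivAt (c i)
        (QN1 a N (fun n => c n t) i + QN2 a N (fun n => c n t) i +
          QN3 a N (fun n => c n t) i + QN4 a N (fun n => c n t) i) t) ∧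
    HasDerivAt (c N) (QN3 a N (fun n => c n t) N + QN4 a N (fun n => c n t) N) t


/-- Growth condition (GB) on the rate coefficients. -/
def GB (a : ℕ → ℕ → ℕ → ℝ) (C Q : ℝ) (q : ℕ → ℕ → ℝ) : Prop :=
  1 ≤ C ∧ 1 ≤ Q ∧ (∀ i k, 0 ≤ q i k) ∧
  (∀ i : ℕ, 1 ≤ i →
    ∑ k ∈ Finset.Icc 1 i, (k : ℝ) * ((i : ℝ) - k + 1) * q i k ≤ Q * i) ∧
  (∀ i j k : ℕ, 1 ≤ k → k ≤ i → 1 ≤ j →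
    a i j k ≤ C * ((i : ℝ) - k + 1) * ((j : ℝ) + k) * q i k)

/-- The class `𝓔` of convex weight functions. -/
def ClassE (σ : ℝ → ℝ) : Prop :=
  ContDiffOn ℝ 1 σ (Set.Ici 0) ∧ ConvexOn ℝ (Set.Ici 0) σ ∧
  (∀ x : ℝ, 0 ≤ x → 0 ≤ σ x) ∧ σ 0 = 0 ∧
  0 ≤ derivWithin σ (Set.Ici 0) 0 ∧
  ConcaveOn ℝ (Set.Ici 0) (derivWithin σ (Set.Ici 0)) ∧
  Filter.Tendsto (derivWithin σ (Set.Ici 0)) Filter.atTop Filter.atTop ∧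
  Filter.Tendsto (fun r : ℝ => σ r / r) Filter.atTop Filter.atTop

/-- The class `𝓔₁` of convex weight functions. -/
def ClassE1 (σ : ℝ → ℝ) : Prop :=
  ContDiffOn ℝ 2 σ (Set.Ici 0) ∧ ConvexOn ℝ (Set.Ici 0) σ ∧
  (∀ x : ℝ, 0 ≤ x → 0 ≤ σ x) ∧ σ 0 = 0 ∧
  derivWithin σ (Set.Ici 0) 0 = 0 ∧
  ConvexOn ℝ (Set.Ici 0) (derivWithin σ (Set.Ici 0)) ∧
  ∃ A : ℝ, 0 ≤ A ∧ ∀ x : ℝ, 0 ≤ x →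
    derivWithin σ (Set.Ici 0) (2 * x) ≤ A * derivWithin σ (Set.Ici 0) x

/-- `m` is a constant associated to `σ` as in Lemma 3.2 of Laurençot–Mischler. -/
def SigmaConst (σ : ℝ → ℝ) (m : ℝ) : Prop :=
  0 ≤ m ∧ ∀ x y : ℝ, 0 ≤ x → 1 ≤ y →
    (x + y) * (σ (x + y) - σ x - σ y) ≤ m * (x * σ y + y * σ x)

lemma swapA (N : ℕ) (f : ℕ → ℕ → ℝ) :
    ∑ i ∈ range (N+1), ∑ k ∈ Icc 1 (N - i), f i k
      = ∑ k ∈ Icc 1 N, ∑ i ∈ Icc 0 (N - k), f i k := by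
  rw [Finset.sum_sigma', Finset.sum_sigma']
  refine Finset.sum_nbij' (fun x => ⟨x.2, x.1⟩) (fun x => ⟨x.2, x.1⟩) ?_ ?_ (fun _ _ => rfl)
    (fun _ _ => rfl) (fun _ _ => rfl) <;>
  · simp only [Finset.mem_sigma, Finset.mem_range, Finset.mem_Icc, Sigma.forall]
    intros; omega

lemma swapB (N : ℕ) (f : ℕ → ℕ → ℝ) :
    ∑ i ∈ range (N+1), ∑ k ∈ Icc 1 i, f i k
      = ∑ k ∈ Icc 1 N, ∑ i ∈ Icc k N, f i k := by
  rw [Finset.sum_sigma', Finset.sum_sigma']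
  refine Finset.sum_nbij' (fun x => ⟨x.2, x.1⟩) (fun x => ⟨x.2, x.1⟩) ?_ ?_ (fun _ _ => rfl)
    (fun _ _ => rfl) (fun _ _ => rfl) <;>
  · simp only [Finset.mem_sigma, Finset.mem_range, Finset.mem_Icc, Sigma.forall]
    intros; omega

lemma shiftIcc (N k : ℕ) (hk : k ≤ N) (f : ℕ → ℝ) :
    ∑ i ∈ Icc 0 (N - k), f (i + k) = ∑ i ∈ Icc k N, f i := by
  refine Finset.sum_nbij' (fun i => i + k) (fun i => i - k) ?_ ?_ ?_ ?_ ?_ <;>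
    simp only [Finset.mem_Icc] <;> intros <;> first | rfl | omega | trivial

lemma weighted_identity (a : ℕ → ℕ → ℕ → ℝ) (N : ℕ) (c : ℕ → ℝ) (g : ℕ → ℝ) :
    ∑ i ∈ range (N+1), g i * (QN1 a N c i + QN2 a N c i + QN3 a N c i + QN4 a N c i)
      = ∑ k ∈ Icc 1 N, ∑ i ∈ Icc k N, ∑ j ∈ Icc 0 (N - k),
          a i j k * c i * c j * (g (i - k) + g (j + k) - g i - g j) := by
  have e1 : ∑ i ∈ range (N+1), g i * QN1 a N c i
      = ∑ k ∈ Icc 1 N, ∑ i ∈ Icc k N, ∑ j ∈ Icc 0 (N - k),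
          a i j k * c i * c j * g (i - k) := by
    simp only [QN1, Finset.mul_sum]
    rw [swapA N (fun i k => ∑ j ∈ Icc 0 (N - k), g i * (a (i + k) j k * c (i + k) * c j))]
    refine Finset.sum_congr rfl fun k hk => ?_
    simp only [Finset.mem_Icc] at hk
    rw [← shiftIcc N k hk.2 (fun i => ∑ j ∈ Icc 0 (N - k), a i j k * c i * c j * g (i - k))]
    refine Finset.sum_congr rfl fun i _ => Finset.sum_congr rfl fun j _ => ?_
    simp only [Nat.add_sub_cancel]
    ring
  have e2 : ∑ i ∈ range (N+1), g i * QN2 a N c i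
      = ∑ k ∈ Icc 1 N, ∑ i ∈ Icc k N, ∑ j ∈ Icc 0 (N - k),
          (-(a i j k * c i * c j * g j)) := by
    simp only [QN2, mul_neg, ← Finset.sum_neg_distrib, Finset.mul_sum]
    rw [swapA N (fun i k => ∑ j ∈ Icc k N, -(g i * (a j i k * c j * c i)))]
    refine Finset.sum_congr rfl fun k hk => ?_
    rw [Finset.sum_comm]
    refine Finset.sum_congr rfl fun i _ => Finset.sum_congr rfl fun j _ => ?_
    ring
  have e3 : ∑ i ∈ range (N+1), g i * QN3 a N c i
      = ∑ k ∈ Icc 1 N, ∑ i ∈ Icc k N, ∑ j ∈ Icc 0 (N - k),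
          a i j k * c i * c j * g (j + k) := by
    simp only [QN3, Finset.mul_sum]
    rw [swapB N (fun i k => ∑ j ∈ Icc k N, g i * (a j (i - k) k * c j * c (i - k)))]
    refine Finset.sum_congr rfl fun k hk => ?_
    simp only [Finset.mem_Icc] at hk
    rw [← shiftIcc N k hk.2 (fun i => ∑ j ∈ Icc k N, g i * (a j (i - k) k * c j * c (i - k)))]
    rw [Finset.sum_comm]
    refine Finset.sum_congr rfl fun i _ => Finset.sum_congr rfl fun j _ => ?_
    simp only [Nat.add_sub_cancel]
    ring
  have e4 : ∑ i ∈ range (N+1), g i * QN4 a N c i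
      = ∑ k ∈ Icc 1 N, ∑ i ∈ Icc k N, ∑ j ∈ Icc 0 (N - k),
          (-(a i j k * c i * c j * g i)) := by
    simp only [QN4, mul_neg, ← Finset.sum_neg_distrib, Finset.mul_sum]
    rw [swapB N (fun i k => ∑ j ∈ Icc 0 (N - k), -(g i * (a i j k * c j * c i)))]
    refine Finset.sum_congr rfl fun k hk => ?_
    refine Finset.sum_congr rfl fun i _ => Finset.sum_congr rfl fun j _ => ?_
    ring
  calc ∑ i ∈ range (N+1), g i * (QN1 a N c i + QN2 a N c i + QN3 a N c i + QN4 a N c i)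
      = (∑ i ∈ range (N+1), g i * QN1 a N c i) + (∑ i ∈ range (N+1), g i * QN2 a N c i)
        + (∑ i ∈ range (N+1), g i * QN3 a N c i) + (∑ i ∈ range (N+1), g i * QN4 a N c i) := by
        simp only [mul_add, Finset.sum_add_distrib]
    _ = ∑ k ∈ Icc 1 N, ∑ i ∈ Icc k N, ∑ j ∈ Icc 0 (N - k),
          (a i j k * c i * c j * g (i - k) + (-(a i j k * c i * c j * g j))
            + a i j k * c i * c j * g (j + k) + (-(a i j k * c i * c j * g i))) := by
        rw [e1, e2, e3, e4]
        simp only [← Finset.sum_add_distrib]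
    _ = _ := by
        refine Finset.sum_congr rfl fun k _ => Finset.sum_congr rfl fun i _ =>
          Finset.sum_congr rfl fun j _ => ?_
        ring

lemma Icc_zero_split (n : ℕ) (f : ℕ → ℝ) :
    ∑ j ∈ Finset.Icc 0 n, f j = f 0 + ∑ j ∈ Finset.Icc 1 n, f j := by
  have h : Finset.Icc 0 n = insert 0 (Finset.Icc 1 n) := by
    ext x; simp only [Finset.mem_Icc, Finset.mem_insert]; omega
  rw [h, Finset.sum_insert (by simp)]

lemma convex_pair {σ : ℝ → ℝ} (h : ConvexOn ℝ (Set.Ici 0) σ) {u v w z : ℝ}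
    (hu : 0 ≤ u) (h1 : u ≤ v) (h3 : v ≤ z) (h2 : u ≤ w) (h4 : w ≤ z)
    (hsum : v + w = u + z) : σ v + σ w ≤ σ u + σ z := by
  rcases eq_or_lt_of_le (h1.trans h3) with heq | hlt
  · have hv : v = u := le_antisymm (by linarith) h1
    have hw : w = z := by linarith
    rw [hv, hw]
  · have hzu : (0:ℝ) < z - u := by linarith
    have ht0 : 0 ≤ (z - v) / (z - u) := div_nonneg (by linarith) (by linarith)
    have ht1 : 0 ≤ 1 - (z - v) / (z - u) := by
      have : (z - v) / (z - u) ≤ 1 := (div_le_one hzu).2 (by linarith)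
      linarith
    have hmemu : u ∈ Set.Ici (0:ℝ) := hu
    have hmemz : z ∈ Set.Ici (0:ℝ) := Set.mem_Ici.2 (by linarith)
    have c1 := h.2 hmemu hmemz ht0 ht1 (by ring)
    have c2 := h.2 hmemu hmemz ht1 ht0 (by ring)
    simp only [smul_eq_mul] at c1 c2
    have hv' : (z - v) / (z - u) * u + (1 - (z - v) / (z - u)) * z = v := by
      field_simp
      ring
    have hw' : (1 - (z - v) / (z - u)) * u + (z - v) / (z - u) * z = w := by
      field_simp
      nlinarith [hsum]
    rw [hv'] at c1
    rw [hw'] at c2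
    nlinarith [c1, c2]

lemma slope_zero {σ : ℝ → ℝ} (h : ConvexOn ℝ (Set.Ici 0) σ) (h0 : σ 0 = 0) {u v : ℝ}
    (hu : 0 ≤ u) (huv : u ≤ v) : v * σ u ≤ u * σ v := by
  rcases eq_or_lt_of_le (hu.trans huv) with heq | hv
  · have hu0 : u = 0 := le_antisymm (heq ▸ huv) hu
    rw [hu0, ← heq, h0]
  · have c := h.2 (Set.mem_Ici.2 hv.le) (Set.mem_Ici.2 (le_refl (0:ℝ)))
      (div_nonneg hu hv.le)
      (show (0:ℝ) ≤ 1 - u / v by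
        have : u / v ≤ 1 := (div_le_one hv).2 huv
        linarith) (by ring)
    simp only [smul_eq_mul, h0, mul_zero, add_zero] at c
    have hvv : u / v * v = u := by field_simp
    rw [hvv] at c
    have h2 := mul_le_mul_of_nonneg_left c hv.le
    calc v * σ u ≤ v * (u / v * σ v) := h2
      _ = u * σ v := by field_simp

lemma sigma_mono {σ : ℝ → ℝ} (h : ConvexOn ℝ (Set.Ici 0) σ) (h0 : σ 0 = 0)
    (hnn : ∀ x : ℝ, 0 ≤ x → 0 ≤ σ x) {u v : ℝ} (hu : 0 ≤ u) (huv : u ≤ v) : σ u ≤ σ v := by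
  rcases eq_or_lt_of_le (hu.trans huv) with heq | hv
  · have hu0 : u = 0 := le_antisymm (heq ▸ huv) hu
    rw [hu0, ← heq, h0]
  · have h1 := slope_zero h h0 hu huv
    have h2 : u * σ v ≤ v * σ v := by
      have := hnn v (hu.trans huv)
      nlinarith
    nlinarith

lemma sigma_superadd {σ : ℝ → ℝ} (h : ConvexOn ℝ (Set.Ici 0) σ) (h0 : σ 0 = 0)
    {x y : ℝ} (hx : 0 ≤ x) (hy : 0 ≤ y) : σ x + σ y ≤ σ (x + y) := by
  have := convex_pair h (u := 0) (v := x) (w := y) (z := x + y) le_rfl hx (by linarith) hy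
    (by linarith) (by ring)
  rw [h0] at this
  linarith

set_option maxHeartbeats 1000000 in
/-- Lemma 4.5, second part: integral bound for the fragmentation-type terms. -/
theorem truncated_fragmentation_integral_bound
    (a : ℕ → ℕ → ℕ → ℝ) (ha : ∀ i j k, 0 ≤ a i j k)
    (hzero : ∀ p : ℕ, 1 ≤ p → a p 0 p = 0)
    (C Q : ℝ) (q : ℕ → ℕ → ℝ) (hGB : GB a C Q q)
    (σ : ℝ → ℝ) (hσ : ClassE σ) (m : ℝ) (hm : SigmaConst σ m) :
    ∃ M₀ : ℕ, 2 ≤ M₀ ∧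
      ∀ T : ℝ, 0 < T →
        ∀ c0 : ℕ → ℝ, (∀ i, 0 ≤ c0 i) → Summable (fun i : ℕ => (i : ℝ) * c0 i) →
          ∃ γ : ℝ, 0 < γ ∧
            ∀ N : ℕ, M₀ ≤ N →
              ∀ c : ℕ → ℝ → ℝ, IsTruncSolIso a N (Set.Icc 0 T) c →
                (∀ i, i ≤ N → c i 0 = c0 i) →
                (∀ i, i ≤ N → ∀ t ∈ Set.Icc (0 : ℝ) T, 0 ≤ c i t) →
                (0 ≤ ∫ t in (0 : ℝ)..T,
                    ∑ p ∈ Finset.Icc M₀ N, ∑ k ∈ Finset.Icc 1 (p - 1),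
                      σ ((p : ℝ) - 1) / ((p : ℝ) - 1) * a p 0 k * c 0 t * c p t) ∧
                (∫ t in (0 : ℝ)..T,
                    ∑ p ∈ Finset.Icc M₀ N, ∑ k ∈ Finset.Icc 1 (p - 1),
                      σ ((p : ℝ) - 1) / ((p : ℝ) - 1) * a p 0 k * c 0 t * c p t)
                  ≤ γ * ∑ i ∈ Finset.range (N + 1), σ i * c0 i := by
  classical
  obtain ⟨hC, hQ, hqnn, hGBsum, hGBa⟩ := hGB
  obtain ⟨hσc1, hσconv, hσnn, hσ0, hd0, hdconc, hdtend, hσtend⟩ := hσ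
  obtain ⟨hm0, hmineq⟩ := hm
  obtain ⟨R, hR⟩ := (Filter.eventually_atTop).1 (hσtend.eventually_ge_atTop (2 * σ 1))
  refine ⟨max 2 (⌈R⌉₊ + 2), le_max_left _ _, ?_⟩
  intro T hT c0 hc0 hsum
  set M₀ := max 2 (⌈R⌉₊ + 2) with hM₀def
  have hM₀2 : 2 ≤ M₀ := le_max_left _ _
  set ρ := ∑' i : ℕ, (i : ℝ) * c0 i with hρdef
  have hρ0 : 0 ≤ ρ := tsum_nonneg fun i => mul_nonneg (Nat.cast_nonneg i) (hc0 i)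
  set K := 2 * C * m * Q * ρ with hKdef
  have hCmQ : 0 ≤ C * m * Q := by
    have : (0:ℝ) ≤ C := le_trans zero_le_one hC
    have : (0:ℝ) ≤ Q := le_trans zero_le_one hQ
    positivity
  have hK0 : 0 ≤ K := by
    rw [hKdef]; nlinarith [hCmQ, hρ0]
  refine ⟨2 * Real.exp (K * T), by positivity, ?_⟩
  intro N hN c hsol hinit hnn
  have hN2 : 2 ≤ N := le_trans hM₀2 hN
  -- all components have the full derivative
  have hder : ∀ t ∈ Set.Icc (0:ℝ) T, ∀ i ∈ range (N+1),
      HasDerivAt (c i) (QN1 a N (fun n => c n t) i + QN2 a N (fun n => c n t) i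
        + QN3 a N (fun n => c n t) i + QN4 a N (fun n => c n t) i) t := by
    intro t ht i hi
    simp only [Finset.mem_range] at hi
    obtain ⟨h0, hmid, hNd⟩ := hsol t ht
    rcases Nat.eq_zero_or_pos i with rfl | hi1
    · have e3 : QN3 a N (fun n => c n t) 0 = 0 := by
        rw [QN3, Finset.Icc_eq_empty (by omega)]; simp
      have e4 : QN4 a N (fun n => c n t) 0 = 0 := by
        rw [QN4, Finset.Icc_eq_empty (by omega)]; simp
      rw [e3, e4, add_zero, add_zero]
      exact h0
    · rcases eq_or_lt_of_le (Nat.lt_succ_iff.1 hi) with heq | hiN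
      · have e1 : QN1 a N (fun n => c n t) N = 0 := by
          rw [QN1, Nat.sub_self, Finset.Icc_eq_empty (by omega)]; simp
        have e2 : QN2 a N (fun n => c n t) N = 0 := by
          rw [QN2, Nat.sub_self, Finset.Icc_eq_empty (by omega)]; simp
        rw [heq, e1, e2, zero_add, zero_add]
        exact hNd
      · exact hmid i hi1 (by omega)
  have hcont : ∀ i ∈ range (N+1), ContinuousOn (c i) (Set.Icc 0 T) :=
    fun i hi t ht => ((hder t ht i hi).continuousAt).continuousWithinAt
  have cnn : ∀ t ∈ Set.Icc (0:ℝ) T, ∀ i ∈ range (N+1), 0 ≤ c i t :=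
    fun t ht i hi => hnn i (by simpa using Nat.lt_succ_iff.1 (Finset.mem_range.1 hi)) t ht
  set S : ℝ → ℝ := fun t => ∑ i ∈ range (N+1), σ (i:ℝ) * c i t with hSdef
  set Mf : ℝ → ℝ := fun t => ∑ i ∈ range (N+1), (i:ℝ) * c i t with hMdef
  set Ff : ℝ → ℝ := fun t => ∑ k ∈ Icc 1 N, ∑ i ∈ Icc k N,
      a i 0 k * c i t * c 0 t *
        (σ (((i - k : ℕ)):ℝ) + σ (((0 + k : ℕ)):ℝ) - σ ((i:ℕ):ℝ) - σ (((0:ℕ)):ℝ)) with hFdef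
  set Gf : ℝ → ℝ := fun t => ∑ k ∈ Icc 1 N, ∑ i ∈ Icc k N, ∑ j ∈ Icc 1 (N - k),
      a i j k * c i t * c j t *
        (σ (((i - k : ℕ)):ℝ) + σ (((j + k : ℕ)):ℝ) - σ ((i:ℕ):ℝ) - σ ((j:ℕ):ℝ)) with hGdef
  -- derivative of S
  have hS_deriv : ∀ t ∈ Set.Icc (0:ℝ) T, HasDerivAt S (Ff t + Gf t) t := by
    intro t ht
    have h1 : HasDerivAt (fun u => ∑ i ∈ range (N+1), σ (i:ℝ) * c i u)
        (∑ i ∈ range (N+1), σ (i:ℝ) * (QN1 a N (fun n => c n t) i + QN2 a N (fun n => c n t) i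
          + QN3 a N (fun n => c n t) i + QN4 a N (fun n => c n t) i)) t :=
      HasDerivAt.fun_sum fun i hi => ((hder t ht i hi).const_mul (σ (i:ℝ)))
    have hid := weighted_identity a N (fun n => c n t) (fun n => σ (n:ℝ))
    rw [hid] at h1
    have hsplit : (∑ k ∈ Icc 1 N, ∑ i ∈ Icc k N, ∑ j ∈ Icc 0 (N - k),
        a i j k * c i t * c j t *
          (σ (((i - k : ℕ)):ℝ) + σ (((j + k : ℕ)):ℝ) - σ ((i:ℕ):ℝ) - σ ((j:ℕ):ℝ)))
        = Ff t + Gf t := by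
      simp only [hFdef, hGdef]
      rw [← Finset.sum_add_distrib]
      refine Finset.sum_congr rfl fun k _ => ?_
      rw [← Finset.sum_add_distrib]
      refine Finset.sum_congr rfl fun i _ => ?_
      rw [Icc_zero_split (N - k) (fun j => a i j k * c i t * c j t *
        (σ (((i - k : ℕ)):ℝ) + σ (((j + k : ℕ)):ℝ) - σ ((i:ℕ):ℝ) - σ ((j:ℕ):ℝ)))]
    rw [hsplit] at h1
    exact h1
  -- derivative of the mass
  have hM_deriv : ∀ t ∈ Set.Icc (0:ℝ) T, HasDerivAt Mf 0 t := by
    intro t ht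
    have h1 : HasDerivAt (fun u => ∑ i ∈ range (N+1), (i:ℝ) * c i u)
        (∑ i ∈ range (N+1), (i:ℝ) * (QN1 a N (fun n => c n t) i + QN2 a N (fun n => c n t) i
          + QN3 a N (fun n => c n t) i + QN4 a N (fun n => c n t) i)) t :=
      HasDerivAt.fun_sum fun i hi => ((hder t ht i hi).const_mul ((i:ℕ):ℝ))
    have hid := weighted_identity a N (fun n => c n t) (fun n => (n:ℝ))
    rw [hid] at h1
    have hz : (∑ k ∈ Icc 1 N, ∑ i ∈ Icc k N, ∑ j ∈ Icc 0 (N - k),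
        a i j k * c i t * c j t *
          ((((i - k : ℕ)):ℝ) + (((j + k : ℕ)):ℝ) - ((i:ℕ):ℝ) - ((j:ℕ):ℝ))) = 0 := by
      refine Finset.sum_eq_zero fun k hk => Finset.sum_eq_zero fun i hi =>
        Finset.sum_eq_zero fun j hj => ?_
      simp only [Finset.mem_Icc] at hk hi hj
      rw [Nat.cast_sub hi.1]
      push_cast
      ring
    rw [hz] at h1
    exact h1
  have hMcont : ContinuousOn Mf (Set.Icc 0 T) := by
    simp only [hMdef]
    exact continuousOn_finset_sum _ fun i hi => continuousOn_const.mul (hcont i hi)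
  have hScont : ContinuousOn S (Set.Icc 0 T) := by
    simp only [hSdef]
    exact continuousOn_finset_sum _ fun i hi => continuousOn_const.mul (hcont i hi)
  have hFcont : ContinuousOn Ff (Set.Icc 0 T) := by
    simp only [hFdef]
    refine continuousOn_finset_sum _ fun k _ => continuousOn_finset_sum _ fun i hi => ?_
    simp only [Finset.mem_Icc] at hi
    have hci : ContinuousOn (c i) (Set.Icc 0 T) := hcont i (Finset.mem_range.2 (by omega))
    have hc0' : ContinuousOn (c 0) (Set.Icc 0 T) := hcont 0 (Finset.mem_range.2 (by omega))
    exact ((continuousOn_const.mul hci).mul hc0').mul continuousOn_const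
  -- mass conservation and bound
  have hMconst : ∀ t ∈ Set.Icc (0:ℝ) T, Mf t = Mf 0 :=
    constant_of_has_deriv_right_zero hMcont
      (fun x hx => (hM_deriv x (Set.Ico_subset_Icc_self hx)).hasDerivWithinAt)
  have hMle : ∀ t ∈ Set.Icc (0:ℝ) T, Mf t ≤ ρ := by
    intro t ht
    rw [hMconst t ht]
    have e0 : Mf 0 = ∑ i ∈ range (N+1), (i:ℝ) * c0 i := by
      simp only [hMdef]
      refine Finset.sum_congr rfl fun i hi => ?_
      rw [hinit i (by simpa using Nat.lt_succ_iff.1 (Finset.mem_range.1 hi))]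
    rw [e0, hρdef]
    exact Summable.sum_le_tsum (range (N+1)) (fun i _ => mul_nonneg (Nat.cast_nonneg i) (hc0 i)) hsum
  have hMnn : ∀ t ∈ Set.Icc (0:ℝ) T, 0 ≤ Mf t := by
    intro t ht
    exact Finset.sum_nonneg fun i hi => mul_nonneg (Nat.cast_nonneg i) (cnn t ht i hi)
  have hSnn : ∀ t ∈ Set.Icc (0:ℝ) T, 0 ≤ S t := by
    intro t ht
    exact Finset.sum_nonneg fun i hi =>
      mul_nonneg (hσnn _ (Nat.cast_nonneg i)) (cnn t ht i hi)
  -- F is nonpositive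
  have hF_nonpos : ∀ t ∈ Set.Icc (0:ℝ) T, Ff t ≤ 0 := by
    intro t ht
    refine Finset.sum_nonpos fun k hk => Finset.sum_nonpos fun i hi => ?_
    simp only [Finset.mem_Icc] at hk hi
    have hbr : σ (((i - k : ℕ)):ℝ) + σ (((0 + k : ℕ)):ℝ) - σ ((i:ℕ):ℝ) - σ (((0:ℕ)):ℝ) ≤ 0 := by
      have hsa := sigma_superadd hσconv hσ0 (x := ((i - k : ℕ):ℝ)) (y := ((k:ℕ):ℝ))
        (Nat.cast_nonneg _) (Nat.cast_nonneg _)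
      have hcast : ((i - k : ℕ):ℝ) + ((k:ℕ):ℝ) = ((i:ℕ):ℝ) := by
        rw [← Nat.cast_add]
        congr 1
        omega
      rw [hcast] at hsa
      simp only [Nat.zero_add, Nat.cast_zero, hσ0]
      linarith
    have hcc : 0 ≤ a i 0 k * c i t * c 0 t :=
      mul_nonneg (mul_nonneg (ha i 0 k) (cnn t ht i (Finset.mem_range.2 (by omega))))
        (cnn t ht 0 (Finset.mem_range.2 (by omega)))
    exact mul_nonpos_of_nonneg_of_nonpos hcc hbr
  -- the key upper bound G ≤ K * S
  have hG_le : ∀ t ∈ Set.Icc (0:ℝ) T, Gf t ≤ K * S t := by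
    intro t ht
    have hMt : Mf t ≤ ρ := hMle t ht
    have hMtnn : 0 ≤ Mf t := hMnn t ht
    have hStnn : 0 ≤ S t := hSnn t ht
    have hC0 : (0:ℝ) ≤ C := le_trans zero_le_one hC
    have hGre : Gf t = ∑ i ∈ range (N+1), ∑ k ∈ Icc 1 i, ∑ j ∈ Icc 1 (N - k),
        a i j k * c i t * c j t *
          (σ (((i - k : ℕ)):ℝ) + σ (((j + k : ℕ)):ℝ) - σ ((i:ℕ):ℝ) - σ ((j:ℕ):ℝ)) := by
      simp only [hGdef]
      rw [swapB N (fun i k => ∑ j ∈ Icc 1 (N - k),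
        a i j k * c i t * c j t *
          (σ (((i - k : ℕ)):ℝ) + σ (((j + k : ℕ)):ℝ) - σ ((i:ℕ):ℝ) - σ ((j:ℕ):ℝ)))]
    rw [hGre]
    have claim : ∀ i ∈ range (N+1), (∑ k ∈ Icc 1 i, ∑ j ∈ Icc 1 (N - k),
        a i j k * c i t * c j t *
          (σ (((i - k : ℕ)):ℝ) + σ (((j + k : ℕ)):ℝ) - σ ((i:ℕ):ℝ) - σ ((j:ℕ):ℝ)))
        ≤ C * m * Q * (σ ((i:ℕ):ℝ) * Mf t + ((i:ℕ):ℝ) * S t) * c i t := by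
      intro i hi
      simp only [Finset.mem_range] at hi
      rcases Nat.eq_zero_or_pos i with rfl | hi1
      · rw [Finset.Icc_eq_empty (by omega)]
        simp [hσ0]
      · have hxi : (0:ℝ) < (i:ℝ) := by exact_mod_cast hi1
        have hci : 0 ≤ c i t := cnn t ht i (Finset.mem_range.2 (by omega))
        have stepA : ∀ k ∈ Icc 1 i, (∑ j ∈ Icc 1 (N - k),
            a i j k * c i t * c j t *
              (σ (((i - k : ℕ)):ℝ) + σ (((j + k : ℕ)):ℝ) - σ ((i:ℕ):ℝ) - σ ((j:ℕ):ℝ)))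
            ≤ (C * (((i:ℕ):ℝ) - ((k:ℕ):ℝ) + 1) * q i k * m * c i t)
              * (σ ((k:ℕ):ℝ) * Mf t + ((k:ℕ):ℝ) * S t) := by
          intro k hk
          simp only [Finset.mem_Icc] at hk
          have hik : ((k:ℕ):ℝ) ≤ ((i:ℕ):ℝ) := by exact_mod_cast hk.2
          have hik1 : (0:ℝ) ≤ ((i:ℕ):ℝ) - ((k:ℕ):ℝ) + 1 := by linarith
          have hconst : 0 ≤ C * (((i:ℕ):ℝ) - ((k:ℕ):ℝ) + 1) * q i k * m * c i t :=
            mul_nonneg (mul_nonneg (mul_nonneg (mul_nonneg hC0 hik1) (hqnn i k)) hm0) hci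
          have hterm : ∀ j ∈ Icc 1 (N - k),
              a i j k * c i t * c j t *
                (σ (((i - k : ℕ)):ℝ) + σ (((j + k : ℕ)):ℝ) - σ ((i:ℕ):ℝ) - σ ((j:ℕ):ℝ))
              ≤ (C * (((i:ℕ):ℝ) - ((k:ℕ):ℝ) + 1) * q i k * m * c i t)
                * ((((j:ℕ):ℝ) * σ ((k:ℕ):ℝ) + ((k:ℕ):ℝ) * σ ((j:ℕ):ℝ)) * c j t) := by
            intro j hj
            simp only [Finset.mem_Icc] at hj
            have hcj : 0 ≤ c j t := cnn t ht j (Finset.mem_range.2 (by omega))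
            have hσk : 0 ≤ σ ((k:ℕ):ℝ) := hσnn _ (Nat.cast_nonneg k)
            have hσj : 0 ≤ σ ((j:ℕ):ℝ) := hσnn _ (Nat.cast_nonneg j)
            have hbrnn : 0 ≤ ((j:ℕ):ℝ) * σ ((k:ℕ):ℝ) + ((k:ℕ):ℝ) * σ ((j:ℕ):ℝ) :=
              add_nonneg (mul_nonneg (Nat.cast_nonneg j) hσk)
                (mul_nonneg (Nat.cast_nonneg k) hσj)
            rcases le_or_gt (σ (((i - k : ℕ)):ℝ) + σ (((j + k : ℕ)):ℝ)
                - σ ((i:ℕ):ℝ) - σ ((j:ℕ):ℝ)) 0 with hΔ | hΔ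
            · have hl := mul_nonpos_of_nonneg_of_nonpos
                (mul_nonneg (mul_nonneg (ha i j k) hci) hcj) hΔ
              have hr : 0 ≤ (C * (((i:ℕ):ℝ) - ((k:ℕ):ℝ) + 1) * q i k * m * c i t)
                  * ((((j:ℕ):ℝ) * σ ((k:ℕ):ℝ) + ((k:ℕ):ℝ) * σ ((j:ℕ):ℝ)) * c j t) :=
                mul_nonneg hconst (mul_nonneg hbrnn hcj)
              linarith
            · have hGBapp := hGBa i j k hk.1 hk.2 hj.1
              have hsa := sigma_superadd hσconv hσ0 (x := ((i - k : ℕ):ℝ)) (y := ((k:ℕ):ℝ))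
                (Nat.cast_nonneg _) (Nat.cast_nonneg _)
              have hcast0 : ((i - k : ℕ):ℝ) + ((k:ℕ):ℝ) = ((i:ℕ):ℝ) := by
                rw [← Nat.cast_add]; congr 1; omega
              rw [hcast0] at hsa
              have hcast : (((j + k : ℕ)):ℝ) = ((j:ℕ):ℝ) + ((k:ℕ):ℝ) := by push_cast; ring
              have hLM := hmineq ((j:ℕ):ℝ) ((k:ℕ):ℝ) (Nat.cast_nonneg j)
                (by exact_mod_cast hk.1)
              have hjk0 : (0:ℝ) ≤ ((j:ℕ):ℝ) + ((k:ℕ):ℝ) :=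
                add_nonneg (Nat.cast_nonneg j) (Nat.cast_nonneg k)
              have hΔ' : (((j:ℕ):ℝ) + ((k:ℕ):ℝ)) * (σ (((i - k : ℕ)):ℝ) + σ (((j + k : ℕ)):ℝ)
                  - σ ((i:ℕ):ℝ) - σ ((j:ℕ):ℝ))
                  ≤ m * (((j:ℕ):ℝ) * σ ((k:ℕ):ℝ) + ((k:ℕ):ℝ) * σ ((j:ℕ):ℝ)) := by
                rw [hcast]
                have hΔle : σ (((i - k : ℕ)):ℝ) + σ (((j:ℕ):ℝ) + ((k:ℕ):ℝ))
                    - σ ((i:ℕ):ℝ) - σ ((j:ℕ):ℝ)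
                    ≤ σ (((j:ℕ):ℝ) + ((k:ℕ):ℝ)) - σ ((j:ℕ):ℝ) - σ ((k:ℕ):ℝ) := by
                  linarith [hsa]
                have hmul := mul_le_mul_of_nonneg_left hΔle hjk0
                linarith [hLM, hmul]
              have hccΔ : 0 ≤ c i t * c j t * (σ (((i - k : ℕ)):ℝ) + σ (((j + k : ℕ)):ℝ)
                  - σ ((i:ℕ):ℝ) - σ ((j:ℕ):ℝ)) :=
                mul_nonneg (mul_nonneg hci hcj) hΔ.le
              have hfac : 0 ≤ C * (((i:ℕ):ℝ) - ((k:ℕ):ℝ) + 1) * q i k * c i t * c j t :=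
                mul_nonneg (mul_nonneg (mul_nonneg (mul_nonneg hC0 hik1) (hqnn i k)) hci) hcj
              calc a i j k * c i t * c j t * (σ (((i - k : ℕ)):ℝ) + σ (((j + k : ℕ)):ℝ)
                    - σ ((i:ℕ):ℝ) - σ ((j:ℕ):ℝ))
                  = a i j k * (c i t * c j t * (σ (((i - k : ℕ)):ℝ) + σ (((j + k : ℕ)):ℝ)
                    - σ ((i:ℕ):ℝ) - σ ((j:ℕ):ℝ))) := by ring
                _ ≤ (C * (((i:ℕ):ℝ) - ((k:ℕ):ℝ) + 1) * (((j:ℕ):ℝ) + ((k:ℕ):ℝ)) * q i k)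
                    * (c i t * c j t * (σ (((i - k : ℕ)):ℝ) + σ (((j + k : ℕ)):ℝ)
                    - σ ((i:ℕ):ℝ) - σ ((j:ℕ):ℝ))) := mul_le_mul_of_nonneg_right hGBapp hccΔ
                _ = (C * (((i:ℕ):ℝ) - ((k:ℕ):ℝ) + 1) * q i k * c i t * c j t)
                    * ((((j:ℕ):ℝ) + ((k:ℕ):ℝ)) * (σ (((i - k : ℕ)):ℝ) + σ (((j + k : ℕ)):ℝ)
                    - σ ((i:ℕ):ℝ) - σ ((j:ℕ):ℝ))) := by ring
                _ ≤ (C * (((i:ℕ):ℝ) - ((k:ℕ):ℝ) + 1) * q i k * c i t * c j t)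
                    * (m * (((j:ℕ):ℝ) * σ ((k:ℕ):ℝ) + ((k:ℕ):ℝ) * σ ((j:ℕ):ℝ))) :=
                  mul_le_mul_of_nonneg_left hΔ' hfac
                _ = (C * (((i:ℕ):ℝ) - ((k:ℕ):ℝ) + 1) * q i k * m * c i t)
                    * ((((j:ℕ):ℝ) * σ ((k:ℕ):ℝ) + ((k:ℕ):ℝ) * σ ((j:ℕ):ℝ)) * c j t) := by
                  ring
          calc (∑ j ∈ Icc 1 (N - k), a i j k * c i t * c j t *
                (σ (((i - k : ℕ)):ℝ) + σ (((j + k : ℕ)):ℝ) - σ ((i:ℕ):ℝ) - σ ((j:ℕ):ℝ)))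
              ≤ ∑ j ∈ Icc 1 (N - k), (C * (((i:ℕ):ℝ) - ((k:ℕ):ℝ) + 1) * q i k * m * c i t)
                * ((((j:ℕ):ℝ) * σ ((k:ℕ):ℝ) + ((k:ℕ):ℝ) * σ ((j:ℕ):ℝ)) * c j t) :=
                Finset.sum_le_sum hterm
            _ = (C * (((i:ℕ):ℝ) - ((k:ℕ):ℝ) + 1) * q i k * m * c i t)
                * ∑ j ∈ Icc 1 (N - k),
                  (((j:ℕ):ℝ) * σ ((k:ℕ):ℝ) + ((k:ℕ):ℝ) * σ ((j:ℕ):ℝ)) * c j t := by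
                rw [Finset.mul_sum]
            _ ≤ (C * (((i:ℕ):ℝ) - ((k:ℕ):ℝ) + 1) * q i k * m * c i t)
                * (σ ((k:ℕ):ℝ) * Mf t + ((k:ℕ):ℝ) * S t) := by
                refine mul_le_mul_of_nonneg_left ?_ hconst
                have e : (∑ j ∈ Icc 1 (N - k),
                    (((j:ℕ):ℝ) * σ ((k:ℕ):ℝ) + ((k:ℕ):ℝ) * σ ((j:ℕ):ℝ)) * c j t)
                    = σ ((k:ℕ):ℝ) * (∑ j ∈ Icc 1 (N - k), ((j:ℕ):ℝ) * c j t)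
                      + ((k:ℕ):ℝ) * (∑ j ∈ Icc 1 (N - k), σ ((j:ℕ):ℝ) * c j t) := by
                  rw [Finset.mul_sum, Finset.mul_sum, ← Finset.sum_add_distrib]
                  exact Finset.sum_congr rfl fun j _ => by ring
                rw [e]
                have s1 : (∑ j ∈ Icc 1 (N - k), ((j:ℕ):ℝ) * c j t) ≤ Mf t := by
                  simp only [hMdef]
                  refine Finset.sum_le_sum_of_subset_of_nonneg ?_ ?_
                  · intro x hx
                    simp only [Finset.mem_Icc] at hx
                    exact Finset.mem_range.2 (by omega)
                  · intro x hx _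
                    exact mul_nonneg (Nat.cast_nonneg x) (cnn t ht x hx)
                have s2 : (∑ j ∈ Icc 1 (N - k), σ ((j:ℕ):ℝ) * c j t) ≤ S t := by
                  simp only [hSdef]
                  refine Finset.sum_le_sum_of_subset_of_nonneg ?_ ?_
                  · intro x hx
                    simp only [Finset.mem_Icc] at hx
                    exact Finset.mem_range.2 (by omega)
                  · intro x hx _
                    exact mul_nonneg (hσnn _ (Nat.cast_nonneg x)) (cnn t ht x hx)
                exact add_le_add (mul_le_mul_of_nonneg_left s1 (hσnn _ (Nat.cast_nonneg k)))
                  (mul_le_mul_of_nonneg_left s2 (Nat.cast_nonneg k))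
        have hMS : 0 ≤ σ ((i:ℕ):ℝ) * Mf t + ((i:ℕ):ℝ) * S t :=
          add_nonneg (mul_nonneg (hσnn _ (Nat.cast_nonneg i)) hMtnn)
            (mul_nonneg (Nat.cast_nonneg i) hStnn)
        have stepB : (∑ k ∈ Icc 1 i, (C * (((i:ℕ):ℝ) - ((k:ℕ):ℝ) + 1) * q i k * m * c i t)
            * (σ ((k:ℕ):ℝ) * Mf t + ((k:ℕ):ℝ) * S t))
            ≤ C * m * Q * (σ ((i:ℕ):ℝ) * Mf t + ((i:ℕ):ℝ) * S t) * c i t := by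
          have hmul : ((i:ℕ):ℝ) * (∑ k ∈ Icc 1 i,
              (C * (((i:ℕ):ℝ) - ((k:ℕ):ℝ) + 1) * q i k * m * c i t)
              * (σ ((k:ℕ):ℝ) * Mf t + ((k:ℕ):ℝ) * S t))
              ≤ ((i:ℕ):ℝ) * (C * m * Q * (σ ((i:ℕ):ℝ) * Mf t + ((i:ℕ):ℝ) * S t) * c i t) := by
            rw [Finset.mul_sum]
            calc (∑ k ∈ Icc 1 i, ((i:ℕ):ℝ) * ((C * (((i:ℕ):ℝ) - ((k:ℕ):ℝ) + 1) * q i k * m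
                  * c i t) * (σ ((k:ℕ):ℝ) * Mf t + ((k:ℕ):ℝ) * S t)))
                ≤ ∑ k ∈ Icc 1 i, (C * m * c i t * (σ ((i:ℕ):ℝ) * Mf t + ((i:ℕ):ℝ) * S t))
                  * (((k:ℕ):ℝ) * (((i:ℕ):ℝ) - ((k:ℕ):ℝ) + 1) * q i k) := by
                  refine Finset.sum_le_sum fun k hk => ?_
                  simp only [Finset.mem_Icc] at hk
                  have hslope : ((i:ℕ):ℝ) * σ ((k:ℕ):ℝ) ≤ ((k:ℕ):ℝ) * σ ((i:ℕ):ℝ) :=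
                    slope_zero hσconv hσ0 (Nat.cast_nonneg k) (by exact_mod_cast hk.2)
                  have hik1 : (0:ℝ) ≤ ((i:ℕ):ℝ) - ((k:ℕ):ℝ) + 1 := by
                    have : ((k:ℕ):ℝ) ≤ ((i:ℕ):ℝ) := by exact_mod_cast hk.2
                    linarith
                  have key : 0 ≤ (C * m * c i t * ((((i:ℕ):ℝ) - ((k:ℕ):ℝ) + 1) * q i k))
                      * ((((k:ℕ):ℝ) * σ ((i:ℕ):ℝ) - ((i:ℕ):ℝ) * σ ((k:ℕ):ℝ)) * Mf t) :=
                    mul_nonneg (mul_nonneg (mul_nonneg (mul_nonneg hC0 hm0) hci)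
                      (mul_nonneg hik1 (hqnn i k)))
                      (mul_nonneg (by linarith [hslope]) hMtnn)
                  nlinarith [key]
              _ = (C * m * c i t * (σ ((i:ℕ):ℝ) * Mf t + ((i:ℕ):ℝ) * S t))
                  * (∑ k ∈ Icc 1 i, ((k:ℕ):ℝ) * (((i:ℕ):ℝ) - ((k:ℕ):ℝ) + 1) * q i k) :=
                  (Finset.mul_sum _ _ _).symm
              _ ≤ (C * m * c i t * (σ ((i:ℕ):ℝ) * Mf t + ((i:ℕ):ℝ) * S t)) * (Q * ((i:ℕ):ℝ)) := by
                  refine mul_le_mul_of_nonneg_left (hGBsum i hi1) ?_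
                  exact mul_nonneg (mul_nonneg (mul_nonneg hC0 hm0) hci) hMS
              _ = ((i:ℕ):ℝ) * (C * m * Q * (σ ((i:ℕ):ℝ) * Mf t + ((i:ℕ):ℝ) * S t) * c i t) := by
                  ring
          exact le_of_mul_le_mul_left hmul hxi
        exact le_trans (Finset.sum_le_sum stepA) stepB
    calc (∑ i ∈ range (N+1), ∑ k ∈ Icc 1 i, ∑ j ∈ Icc 1 (N - k),
          a i j k * c i t * c j t *
            (σ (((i - k : ℕ)):ℝ) + σ (((j + k : ℕ)):ℝ) - σ ((i:ℕ):ℝ) - σ ((j:ℕ):ℝ)))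
        ≤ ∑ i ∈ range (N+1), C * m * Q * (σ ((i:ℕ):ℝ) * Mf t + ((i:ℕ):ℝ) * S t) * c i t :=
          Finset.sum_le_sum claim
      _ = (C * m * Q * Mf t) * S t + (C * m * Q * S t) * Mf t := by
          rw [Finset.sum_congr rfl (fun i (_ : i ∈ range (N+1)) =>
            (show C * m * Q * (σ ((i:ℕ):ℝ) * Mf t + ((i:ℕ):ℝ) * S t) * c i t
              = (C * m * Q * Mf t) * (σ ((i:ℕ):ℝ) * c i t)
                + (C * m * Q * S t) * (((i:ℕ):ℝ) * c i t) by ring))]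
          rw [Finset.sum_add_distrib, ← Finset.mul_sum, ← Finset.mul_sum]
      _ ≤ K * S t := by
          rw [hKdef]
          nlinarith [mul_nonneg hCmQ (mul_nonneg (sub_nonneg.2 hMt) hStnn)]
  -- Gronwall-type estimate
  have hgron : (∫ s in (0:ℝ)..T, (-Ff s)) ≤ Real.exp (K * T) * S 0 := by
    have hexpC : Continuous fun u : ℝ => Real.exp (-K*u) :=
      Real.continuous_exp.comp (continuous_const.mul continuous_id)
    have hExpCont : ContinuousOn (fun s : ℝ => Real.exp (-K*s) * (-Ff s)) (Set.Icc 0 T) :=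
      hexpC.continuousOn.mul hFcont.neg
    have hIcc : Set.uIcc (0:ℝ) T = Set.Icc 0 T := Set.uIcc_of_le hT.le
    have hIntOn : MeasureTheory.IntegrableOn (fun s : ℝ => Real.exp (-K*s) * (-Ff s))
        (Set.uIcc 0 T) MeasureTheory.volume := by
      rw [hIcc]; exact hExpCont.integrableOn_Icc
    set φ : ℝ → ℝ := fun u => Real.exp (-K*u) * S u
      + ∫ s in (0:ℝ)..u, Real.exp (-K*s) * (-Ff s) with hφdef
    have hφder : ∀ x ∈ Set.Ioo (0:ℝ) T,
        HasDerivAt φ (Real.exp (-K*x) * (Gf x - K * S x)) x := by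
      intro x hx
      have hxI : x ∈ Set.Icc (0:ℝ) T := Set.Ioo_subset_Icc_self hx
      have h1 : HasDerivAt (fun u : ℝ => Real.exp (-K*u)) (-K * Real.exp (-K*x)) x := by
        have h0 : HasDerivAt (fun u : ℝ => -K*u) (-K) x := by
          simpa using (hasDerivAt_id x).const_mul (-K)
        have := h0.exp
        simpa [mul_comm] using this
      have h2 := h1.mul (hS_deriv x hxI)
      have h3 : HasDerivAt (fun u : ℝ => ∫ s in (0:ℝ)..u, Real.exp (-K*s) * (-Ff s))
          (Real.exp (-K*x) * (-Ff x)) x := by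
        refine intervalIntegral.integral_hasDerivAt_right ?_ ?_ ?_
        · refine (hExpCont.mono ?_).intervalIntegrable
          rw [Set.uIcc_of_le hx.1.le]
          exact Set.Icc_subset_Icc le_rfl hx.2.le
        · exact ContinuousOn.stronglyMeasurableAtFilter isOpen_Ioo
            (hExpCont.mono Set.Ioo_subset_Icc_self) x hx
        · exact (hExpCont.mono Set.Ioo_subset_Icc_self).continuousAt (isOpen_Ioo.mem_nhds hx)
      have h4 := h2.add h3
      have heq : -K * Real.exp (-K*x) * S x + Real.exp (-K*x) * (Ff x + Gf x)
          + Real.exp (-K*x) * (-Ff x) = Real.exp (-K*x) * (Gf x - K * S x) := by ring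
      rw [heq] at h4
      exact h4
    have hφanti : AntitoneOn φ (Set.Icc 0 T) := by
      apply antitoneOn_of_deriv_nonpos (convex_Icc 0 T)
      · simp only [hφdef]
        refine ContinuousOn.add (hexpC.continuousOn.mul hScont) ?_
        have hprim := intervalIntegral.continuousOn_primitive_interval (a := (0:ℝ)) (b := T) hIntOn
        rw [hIcc] at hprim
        exact hprim
      · intro x hx
        rw [interior_Icc] at hx
        exact ((hφder x hx).differentiableAt).differentiableWithinAt
      · intro x hx
        rw [interior_Icc] at hx
        rw [(hφder x hx).deriv]
        have h1 : Gf x - K * S x ≤ 0 := by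
          have := hG_le x (Set.Ioo_subset_Icc_self hx)
          linarith
        exact mul_nonpos_of_nonneg_of_nonpos (Real.exp_pos _).le h1
    have hφT : φ T ≤ φ 0 := hφanti (Set.left_mem_Icc.2 hT.le) (Set.right_mem_Icc.2 hT.le) hT.le
    simp only [hφdef, intervalIntegral.integral_same, add_zero, mul_zero, neg_zero,
      Real.exp_zero, one_mul] at hφT
    have hST : 0 ≤ Real.exp (-K*T) * S T :=
      mul_nonneg (Real.exp_pos _).le (hSnn T (Set.right_mem_Icc.2 hT.le))
    have hInt1 : (∫ s in (0:ℝ)..T, Real.exp (-K*s) * (-Ff s)) ≤ S 0 := by linarith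
    have hmono : ∀ s ∈ Set.Icc (0:ℝ) T,
        -Ff s ≤ Real.exp (K*T) * (Real.exp (-K*s) * (-Ff s)) := by
      intro s hs
      have hF := hF_nonpos s hs
      have h1 : 1 ≤ Real.exp (K*T) * Real.exp (-K*s) := by
        rw [← Real.exp_add]
        refine Real.one_le_exp ?_
        have h2 := hs.1
        have h3 := hs.2
        nlinarith [hK0]
      nlinarith [hF, h1]
    have hi1 : IntervalIntegrable (fun s => -Ff s) MeasureTheory.volume 0 T :=
      (hFcont.neg.mono (le_of_eq hIcc)).intervalIntegrable
    have hi2 : IntervalIntegrable (fun s => Real.exp (K*T) * (Real.exp (-K*s) * (-Ff s)))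
        MeasureTheory.volume 0 T :=
      ((continuousOn_const.mul hExpCont).mono (le_of_eq hIcc)).intervalIntegrable
    calc (∫ s in (0:ℝ)..T, -Ff s)
        ≤ ∫ s in (0:ℝ)..T, Real.exp (K*T) * (Real.exp (-K*s) * (-Ff s)) :=
          intervalIntegral.integral_mono_on hT.le hi1 hi2 hmono
      _ = Real.exp (K*T) * ∫ s in (0:ℝ)..T, Real.exp (-K*s) * (-Ff s) :=
          intervalIntegral.integral_const_mul _ _
      _ ≤ Real.exp (K*T) * S 0 := mul_le_mul_of_nonneg_left hInt1 (Real.exp_pos _).le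
  -- comparison of the statement integrand with -Ff
  have hPle : ∀ t ∈ Set.Icc (0:ℝ) T,
      (∑ p ∈ Finset.Icc M₀ N, ∑ k ∈ Finset.Icc 1 (p - 1),
        σ ((p : ℝ) - 1) / ((p : ℝ) - 1) * a p 0 k * c 0 t * c p t) ≤ 2 * (-Ff t) := by
    intro t ht
    have hc0t : 0 ≤ c 0 t := cnn t ht 0 (Finset.mem_range.2 (by omega))
    have hW : (∑ i ∈ range (N+1), ∑ k ∈ Icc 1 i, a i 0 k * c i t * c 0 t *
          (σ ((i:ℕ):ℝ) + σ (((0:ℕ)):ℝ) - σ (((i - k : ℕ)):ℝ) - σ (((0 + k : ℕ)):ℝ)))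
        = -Ff t := by
      rw [swapB N (fun i k => a i 0 k * c i t * c 0 t *
          (σ ((i:ℕ):ℝ) + σ (((0:ℕ)):ℝ) - σ (((i - k : ℕ)):ℝ) - σ (((0 + k : ℕ)):ℝ)))]
      simp only [hFdef, ← Finset.sum_neg_distrib]
      refine Finset.sum_congr rfl fun k _ => Finset.sum_congr rfl fun i _ => by ring
    have hwnn : ∀ i ∈ range (N+1), ∀ k ∈ Icc 1 i, 0 ≤ a i 0 k * c i t * c 0 t *
          (σ ((i:ℕ):ℝ) + σ (((0:ℕ)):ℝ) - σ (((i - k : ℕ)):ℝ) - σ (((0 + k : ℕ)):ℝ)) := by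
      intro i hi k hk
      simp only [Finset.mem_range] at hi
      simp only [Finset.mem_Icc] at hk
      have hbr : 0 ≤ σ ((i:ℕ):ℝ) + σ (((0:ℕ)):ℝ) - σ (((i - k:ℕ)):ℝ) - σ (((0 + k:ℕ)):ℝ) := by
        have hsa := sigma_superadd hσconv hσ0 (x := ((i - k : ℕ):ℝ)) (y := ((k:ℕ):ℝ))
          (Nat.cast_nonneg _) (Nat.cast_nonneg _)
        have hcast : ((i - k : ℕ):ℝ) + ((k:ℕ):ℝ) = ((i:ℕ):ℝ) := by
          rw [← Nat.cast_add]; congr 1; omega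
        rw [hcast] at hsa
        simp only [Nat.zero_add, Nat.cast_zero, hσ0]
        linarith
      exact mul_nonneg (mul_nonneg (mul_nonneg (ha i 0 k)
        (cnn t ht i (Finset.mem_range.2 (by omega)))) hc0t) hbr
    have hkey : ∀ p ∈ Finset.Icc M₀ N, ∀ k ∈ Finset.Icc 1 (p-1),
        σ ((p : ℝ) - 1) / ((p : ℝ) - 1) * a p 0 k * c 0 t * c p t
          ≤ 2 * (a p 0 k * c p t * c 0 t *
            (σ ((p:ℕ):ℝ) + σ (((0:ℕ)):ℝ) - σ (((p - k : ℕ)):ℝ) - σ (((0 + k : ℕ)):ℝ))) := by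
      intro p hp k hk
      simp only [Finset.mem_Icc] at hp hk
      have hp2 : 2 ≤ p := le_trans hM₀2 hp.1
      have hx2 : (2:ℝ) ≤ (p:ℝ) := by exact_mod_cast hp2
      have hx1 : (0:ℝ) < (p:ℝ) - 1 := by linarith
      have hcast1 : ((p - 1 : ℕ):ℝ) = (p:ℝ) - 1 := by
        rw [Nat.cast_sub (by omega)]; simp
      have hRp : R ≤ (p:ℝ) - 1 := by
        have h1 : (⌈R⌉₊ + 2 : ℕ) ≤ p := le_trans (le_max_right _ _) hp.1
        have h2 : ((⌈R⌉₊:ℝ) + 2) ≤ (p:ℝ) := by exact_mod_cast h1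
        have h3 : R ≤ (⌈R⌉₊:ℝ) := Nat.le_ceil R
        linarith
      have hs2 : 2 * σ 1 ≤ σ ((p:ℝ) - 1) / ((p:ℝ) - 1) := hR _ hRp
      have hslope := slope_zero hσconv hσ0 (u := (p:ℝ) - 1) (v := (p:ℝ)) (by linarith) (by linarith)
      have hs3 : σ ((p:ℝ) - 1) / ((p:ℝ) - 1) ≤ σ (p:ℝ) - σ ((p:ℝ) - 1) := by
        rw [div_le_iff₀ hx1]
        nlinarith [hslope]
      have hck : ((k:ℕ):ℝ) ≤ (p:ℝ) - 1 := by
        rw [← hcast1]; exact_mod_cast hk.2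
      have hcpk1 : (1:ℝ) ≤ ((p - k : ℕ):ℝ) := by
        have : (1:ℕ) ≤ p - k := by omega
        exact_mod_cast this
      have hcpk2 : ((p - k : ℕ):ℝ) ≤ (p:ℝ) - 1 := by
        rw [← hcast1]
        exact_mod_cast (show p - k ≤ p - 1 by omega)
      have hsum' : ((k:ℕ):ℝ) + ((p - k : ℕ):ℝ) = 1 + ((p:ℝ) - 1) := by
        have : ((k:ℕ):ℝ) + ((p - k : ℕ):ℝ) = (p:ℝ) := by
          rw [← Nat.cast_add]; congr 1; omega
        linarith [this]
      have hpair := convex_pair hσconv (u := (1:ℝ)) (v := ((k:ℕ):ℝ)) (w := ((p - k : ℕ):ℝ))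
        (z := (p:ℝ) - 1) zero_le_one (by exact_mod_cast hk.1) hck hcpk1 hcpk2 hsum'
      have hB : σ ((p:ℝ) - 1) / ((p:ℝ) - 1)
          ≤ 2 * (σ ((p:ℕ):ℝ) + σ (((0:ℕ)):ℝ) - σ (((p - k : ℕ)):ℝ) - σ (((0 + k : ℕ)):ℝ)) := by
        simp only [Nat.zero_add, Nat.cast_zero, hσ0]
        linarith [hpair, hs3, hs2]
      have hcp : 0 ≤ c p t := cnn t ht p (Finset.mem_range.2 (by omega))
      have hprod : 0 ≤ a p 0 k * c 0 t * c p t :=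
        mul_nonneg (mul_nonneg (ha p 0 k) hc0t) hcp
      have h2 := mul_le_mul_of_nonneg_right hB hprod
      nlinarith [h2]
    calc (∑ p ∈ Finset.Icc M₀ N, ∑ k ∈ Finset.Icc 1 (p - 1),
          σ ((p : ℝ) - 1) / ((p : ℝ) - 1) * a p 0 k * c 0 t * c p t)
        ≤ ∑ p ∈ Finset.Icc M₀ N, ∑ k ∈ Finset.Icc 1 (p - 1),
            2 * (a p 0 k * c p t * c 0 t *
              (σ ((p:ℕ):ℝ) + σ (((0:ℕ)):ℝ) - σ (((p - k : ℕ)):ℝ) - σ (((0 + k : ℕ)):ℝ))) :=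
          Finset.sum_le_sum fun p hp => Finset.sum_le_sum fun k hk => hkey p hp k hk
      _ ≤ ∑ p ∈ Finset.Icc M₀ N, ∑ k ∈ Finset.Icc 1 p,
            2 * (a p 0 k * c p t * c 0 t *
              (σ ((p:ℕ):ℝ) + σ (((0:ℕ)):ℝ) - σ (((p - k : ℕ)):ℝ) - σ (((0 + k : ℕ)):ℝ))) := by
          refine Finset.sum_le_sum fun p hp => ?_
          simp only [Finset.mem_Icc] at hp
          refine Finset.sum_le_sum_of_subset_of_nonneg
            (Finset.Icc_subset_Icc_right (by omega)) ?_
          intro k hk _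
          have h1 : a p 0 k * c p t * c 0 t *
              (σ ((p:ℕ):ℝ) + σ (((0:ℕ)):ℝ) - σ (((p - k:ℕ)):ℝ) - σ (((0 + k:ℕ)):ℝ))
              = a p 0 k * c p t * c 0 t *
              (σ ((p:ℕ):ℝ) + σ (((0:ℕ)):ℝ) - σ (((p - k:ℕ)):ℝ) - σ (((0 + k:ℕ)):ℝ)) := rfl
          have := hwnn p (Finset.mem_range.2 (by omega)) k hk
          linarith [this]
      _ ≤ ∑ p ∈ range (N+1), ∑ k ∈ Finset.Icc 1 p,
            2 * (a p 0 k * c p t * c 0 t *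
              (σ ((p:ℕ):ℝ) + σ (((0:ℕ)):ℝ) - σ (((p - k : ℕ)):ℝ) - σ (((0 + k : ℕ)):ℝ))) := by
          refine Finset.sum_le_sum_of_subset_of_nonneg ?_ ?_
          · intro p hp
            simp only [Finset.mem_Icc] at hp
            exact Finset.mem_range.2 (by omega)
          · intro p hp _
            exact Finset.sum_nonneg fun k hk => by
              have := hwnn p hp k hk
              linarith [this]
      _ = 2 * (-Ff t) := by
          rw [← hW, Finset.mul_sum]
          refine Finset.sum_congr rfl fun p _ => ?_
          rw [Finset.mul_sum]
  have hPnn : ∀ t ∈ Set.Icc (0:ℝ) T,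
      0 ≤ ∑ p ∈ Finset.Icc M₀ N, ∑ k ∈ Finset.Icc 1 (p - 1),
        σ ((p : ℝ) - 1) / ((p : ℝ) - 1) * a p 0 k * c 0 t * c p t := by
    intro t ht
    refine Finset.sum_nonneg fun p hp => Finset.sum_nonneg fun k hk => ?_
    simp only [Finset.mem_Icc] at hp hk
    have hp1 : (1:ℝ) ≤ (p:ℝ) - 1 := by
      have : (2:ℕ) ≤ p := le_trans hM₀2 hp.1
      have : (2:ℝ) ≤ (p:ℝ) := by exact_mod_cast this
      linarith
    have h1 : 0 ≤ σ ((p:ℝ) - 1) / ((p:ℝ) - 1) :=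
      div_nonneg (hσnn _ (by linarith)) (by linarith)
    exact mul_nonneg (mul_nonneg (mul_nonneg h1 (ha p 0 k))
      (cnn t ht 0 (Finset.mem_range.2 (by omega)))) (cnn t ht p (Finset.mem_range.2 (by omega)))
  have hPcont : ContinuousOn (fun t => ∑ p ∈ Finset.Icc M₀ N, ∑ k ∈ Finset.Icc 1 (p - 1),
      σ ((p : ℝ) - 1) / ((p : ℝ) - 1) * a p 0 k * c 0 t * c p t) (Set.Icc 0 T) := by
    refine continuousOn_finset_sum _ fun p hp => continuousOn_finset_sum _ fun k _ => ?_
    simp only [Finset.mem_Icc] at hp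
    exact (continuousOn_const.mul (hcont 0 (Finset.mem_range.2 (by omega)))).mul
      (hcont p (Finset.mem_range.2 (by omega)))
  -- conclusion
  constructor
  · exact intervalIntegral.integral_nonneg (le_of_lt hT) hPnn
  · have hS0 : S 0 = ∑ i ∈ Finset.range (N+1), σ (i:ℝ) * c0 i := by
      simp only [hSdef]
      refine Finset.sum_congr rfl fun i hi => ?_
      rw [hinit i (by simpa using Nat.lt_succ_iff.1 (Finset.mem_range.1 hi))]
    have hIcc : Set.uIcc (0:ℝ) T = Set.Icc 0 T := Set.uIcc_of_le (le_of_lt hT)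
    have hint1 : IntervalIntegrable (fun t => ∑ p ∈ Finset.Icc M₀ N, ∑ k ∈ Finset.Icc 1 (p - 1),
        σ ((p : ℝ) - 1) / ((p : ℝ) - 1) * a p 0 k * c 0 t * c p t) MeasureTheory.volume 0 T :=
      (hPcont.mono (le_of_eq hIcc)).intervalIntegrable
    have hint2 : IntervalIntegrable (fun t => 2 * (-Ff t)) MeasureTheory.volume 0 T :=
      (((hFcont.neg).const_smul (2:ℝ)).mono (le_of_eq hIcc)).intervalIntegrable
    calc (∫ t in (0:ℝ)..T, ∑ p ∈ Finset.Icc M₀ N, ∑ k ∈ Finset.Icc 1 (p - 1),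
          σ ((p : ℝ) - 1) / ((p : ℝ) - 1) * a p 0 k * c 0 t * c p t)
        ≤ ∫ t in (0:ℝ)..T, 2 * (-Ff t) :=
          intervalIntegral.integral_mono_on (le_of_lt hT) hint1 hint2 hPle
      _ = 2 * ∫ t in (0:ℝ)..T, (-Ff t) := intervalIntegral.integral_const_mul 2 _
      _ ≤ 2 * (Real.exp (K * T) * S 0) := by linarith [hgron]
      _ = 2 * Real.exp (K * T) * ∑ i ∈ Finset.range (N+1), σ (i:ℝ) * c0 i := by
          rw [hS0]; ring
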